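/- Let p be a prime and let K be the perfect closure of the rational function field F_p(X) over the prime field F_p (so K = F_p(X)^{1/p^∞}), with X ∈ K the image of the variable. Fix e ≥ 1 and write q = p^e. Define F : K × K → K × K by F(v₁, v₂) = (v₂^q, v₁^q + X·v₂^q). Then F is an injective additive map satisfying F(c·v) = c^q·F(v) for c ∈ K, and for every r ≥ 1 the only K-linear subspaces W ⊆ K × K with F^r(W) ⊆ W are {0} and K × K. In particular, (K², F) is a simple unit K[F]-module, while (K being perfect, so that every K-subspace is a D_K-submodule) it is not simple as a D_K-module. -/

import Mathlib

/-- The rational function field `F_p(X)`, realized as the fraction field of the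
polynomial ring `F_p[X]`. -/
abbrev FpRatFunc (p : ℕ) [Fact p.Prime] : Type :=
  FractionRing (Polynomial (ZMod p))

/-- The perfect closure `K = F_p(X)^{1/p^∞}` of the rational function field. -/
abbrev PerfClos (p : ℕ) [Fact p.Prime] : Type :=
  PerfectClosure (FpRatFunc p) p

namespace SUAux

/-- The auxiliary `q`-power semilinear map `(v₁,v₂) ↦ (v₂^q, v₁^q + c·v₂^q)`. -/
def Gm {A : Type*} [CommSemiring A] (q : ℕ) (c : A) (w : A × A) : A × A :=
  (w.2 ^ q, w.1 ^ q + c * w.2 ^ q)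

section CommRing

variable {A B : Type*} [CommRing A] [CommRing B]

lemma smul_pair (μ : A) (w : A × A) : μ • w = (μ * w.1, μ * w.2) := rfl

lemma Gm_map (ψ : A →+* B) (q : ℕ) (c : A) (w : A × A) :
    (ψ (Gm q c w).1, ψ (Gm q c w).2) = Gm q (ψ c) (ψ w.1, ψ w.2) := by
  simp [Gm]

lemma Gm_iter_map (ψ : A →+* B) (q : ℕ) (c : A) (r : ℕ) (w : A × A) :
    (ψ (((Gm q c)^[r] w).1), ψ (((Gm q c)^[r] w).2)) =
      (Gm q (ψ c))^[r] (ψ w.1, ψ w.2) := by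
  induction r generalizing w with
  | zero => rfl
  | succ r ih =>
      rw [Function.iterate_succ_apply, Function.iterate_succ_apply,
        ih (Gm q c w), ← Gm_map]

lemma Gm_smul (q : ℕ) (c μ : A) (w : A × A) :
    Gm q c (μ • w) = μ ^ q • Gm q c w := by
  rw [smul_pair, smul_pair]
  simp only [Gm, Prod.mk.injEq]
  constructor <;> ring

lemma Gm_iter_smul (q : ℕ) (c μ : A) (r : ℕ) (w : A × A) :
    (Gm q c)^[r] (μ • w) = μ ^ q ^ r • (Gm q c)^[r] w := by
  induction r generalizing w μ with
  | zero => simp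
  | succ r ih =>
      rw [Function.iterate_succ_apply, Function.iterate_succ_apply, Gm_smul,
        ih (μ ^ q) (Gm q c w), ← pow_mul]
      congr 2
      rw [pow_succ']

end CommRing

section Field

variable {k : Type*} [Field k] {p : ℕ} [Fact p.Prime] [CharP k p]

lemma ppow_inj {m : ℕ} {x y : k} (h : x ^ p ^ m = y ^ p ^ m) : x = y := by
  have hp : p ^ m ≠ 0 := pow_ne_zero _ (Nat.Prime.ne_zero Fact.out)
  have h2 : (x - y) ^ p ^ m = 0 := by rw [sub_pow_char_pow, h, sub_self]
  have := pow_eq_zero_iff hp |>.mp h2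
  exact sub_eq_zero.mp this

lemma pair_eq_zero_iff' {M N : Type*} [Zero M] [Zero N] (w : M × N) :
    w = 0 ↔ w.1 = 0 ∧ w.2 = 0 := by
  rw [Prod.ext_iff]; simp

lemma pair_eq_zero_iff (w : k × k) : w = 0 ↔ w.1 = 0 ∧ w.2 = 0 :=
  pair_eq_zero_iff' w

lemma ppow_inj' {x y : k} (h : x ^ p = y ^ p) : x = y := by
  apply ppow_inj (p := p) (m := 1)
  rwa [pow_one]

lemma Gm_ne_zero {q : ℕ} (hq : q ≠ 0) (c : k) {w : k × k} (hw : w ≠ 0) :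
    Gm q c w ≠ 0 := by
  intro h0
  have h1 : w.2 ^ q = 0 := congrArg Prod.fst h0
  have h2 : w.1 ^ q + c * w.2 ^ q = 0 := congrArg Prod.snd h0
  have hw2 : w.2 = 0 := pow_eq_zero_iff hq |>.mp h1
  rw [hw2, zero_pow hq, mul_zero, add_zero] at h2
  exact hw ((pair_eq_zero_iff w).mpr ⟨pow_eq_zero_iff hq |>.mp h2, hw2⟩)

lemma Gm_iter_ne_zero {q : ℕ} (hq : q ≠ 0) (c : k) (r : ℕ) {w : k × k} (hw : w ≠ 0) :
    (Gm q c)^[r] w ≠ 0 := by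
  induction r generalizing w with
  | zero => simpa
  | succ r ih => rw [Function.iterate_succ_apply]; exact ih (Gm_ne_zero hq c hw)

lemma Gm_frob (q : ℕ) (c : k) (s : k × k) :
    Gm q (c ^ p) (s.1 ^ p, s.2 ^ p) = ((Gm q c s).1 ^ p, (Gm q c s).2 ^ p) := by
  simp only [Gm, Prod.mk.injEq]
  constructor
  · rw [← pow_mul, ← pow_mul, mul_comm]
  · rw [add_pow_char, mul_pow, ← pow_mul, ← pow_mul, ← pow_mul, ← pow_mul,
      mul_comm q p]

lemma Gm_iter_frob (q : ℕ) (c : k) (r : ℕ) (s : k × k) :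
    (Gm q (c ^ p))^[r] (s.1 ^ p, s.2 ^ p) =
      (((Gm q c)^[r] s).1 ^ p, ((Gm q c)^[r] s).2 ^ p) := by
  induction r generalizing s with
  | zero => rfl
  | succ r ih =>
      rw [Function.iterate_succ_apply, Function.iterate_succ_apply, Gm_frob,
        ih (Gm q c s)]

end Field

end SUAux

namespace SUAux

section Poly

variable {F : Type*} [Field F]

open Polynomial

/-- Height of a pair of polynomials. -/
def Hgt (w : Polynomial F × Polynomial F) : ℕ := max w.1.natDegree w.2.natDegree

lemma snd_deg {q : ℕ} (hq : 2 ≤ q) {f h : Polynomial F} (hh : h ≠ 0) :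
    (f ^ q + Polynomial.X * h ^ q).natDegree
      = max (q * f.natDegree) (1 + q * h.natDegree) := by
  have hXh : (Polynomial.X * h ^ q).natDegree = 1 + q * h.natDegree := by
    rw [Polynomial.natDegree_mul Polynomial.X_ne_zero (pow_ne_zero _ hh),
      Polynomial.natDegree_X, Polynomial.natDegree_pow]
  rcases le_or_gt f.natDegree h.natDegree with hle | hlt
  · have hmul : q * f.natDegree ≤ q * h.natDegree := Nat.mul_le_mul_left q hle
    have h1 : (f ^ q).natDegree < (Polynomial.X * h ^ q).natDegree := by
      rw [Polynomial.natDegree_pow, hXh]; omega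
    rw [Polynomial.natDegree_add_eq_right_of_natDegree_lt h1, hXh]
    exact (max_eq_right (by omega)).symm
  · have hf : f ≠ 0 := by
      intro h0
      rw [h0, Polynomial.natDegree_zero] at hlt; omega
    have hmul : q * (h.natDegree + 1) ≤ q * f.natDegree :=
      Nat.mul_le_mul_left q (by omega)
    have hms : q * (h.natDegree + 1) = q * h.natDegree + q := Nat.mul_succ q _
    have h1 : (Polynomial.X * h ^ q).natDegree < (f ^ q).natDegree := by
      rw [Polynomial.natDegree_pow, hXh]; omega
    rw [Polynomial.natDegree_add_eq_left_of_natDegree_lt h1, Polynomial.natDegree_pow]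
    exact (max_eq_left (by omega)).symm

lemma Gm_snd_ne {q : ℕ} (hq : 2 ≤ q) {w : Polynomial F × Polynomial F} (hw : w ≠ 0) :
    (Gm q Polynomial.X w).2 ≠ 0 := by
  have hq0 : q ≠ 0 := by omega
  rcases eq_or_ne w.2 0 with h2 | h2
  · have h1 : w.1 ≠ 0 := by
      intro h0; exact hw (Prod.ext_iff.mpr ⟨h0, h2⟩)
    show w.1 ^ q + Polynomial.X * w.2 ^ q ≠ 0
    rw [h2, zero_pow hq0, mul_zero, add_zero]
    exact pow_ne_zero _ h1
  · show w.1 ^ q + Polynomial.X * w.2 ^ q ≠ 0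
    intro h0
    have := snd_deg hq (f := w.1) h2
    rw [h0, Polynomial.natDegree_zero] at this
    omega
    
lemma Gm_poly_ne {q : ℕ} (hq : 2 ≤ q) {w : Polynomial F × Polynomial F} (hw : w ≠ 0) :
    Gm q Polynomial.X w ≠ 0 := by
  intro h0
  exact Gm_snd_ne hq hw (by rw [h0]; rfl)

lemma Hgt_lt {q : ℕ} (hq : 2 ≤ q) {w : Polynomial F × Polynomial F} (hw2 : w.2 ≠ 0) :
    Hgt w < Hgt (Gm q Polynomial.X w) := by
  show max w.1.natDegree w.2.natDegree <
    max ((w.2 ^ q).natDegree) ((w.1 ^ q + Polynomial.X * w.2 ^ q).natDegree)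
  rw [Polynomial.natDegree_pow, snd_deg hq hw2]
  have h1 : w.1.natDegree ≤ q * w.1.natDegree := Nat.le_mul_of_pos_left _ (by omega)
  have h2 : w.2.natDegree ≤ q * w.2.natDegree := Nat.le_mul_of_pos_left _ (by omega)
  rcases le_or_gt w.1.natDegree w.2.natDegree with hle | hlt
  · have hmul : q * w.1.natDegree ≤ q * w.2.natDegree := Nat.mul_le_mul_left q hle
    omega
  · have hf : w.1 ≠ 0 := by
      intro h0; rw [h0, Polynomial.natDegree_zero] at hlt; omega
    have hd1 : 1 ≤ w.1.natDegree := by omega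
    have hmul : 2 * w.1.natDegree ≤ q * w.1.natDegree :=
      Nat.mul_le_mul_right _ (by omega)
    omega

lemma Hgt_le {q : ℕ} (hq : 2 ≤ q) {w : Polynomial F × Polynomial F} (hw : w ≠ 0) :
    Hgt w ≤ Hgt (Gm q Polynomial.X w) := by
  rcases eq_or_ne w.2 0 with h2 | h2
  · have h1 : w.1 ≠ 0 := by
      intro h0; exact hw (Prod.ext_iff.mpr ⟨h0, h2⟩)
    show max w.1.natDegree w.2.natDegree ≤
      max ((w.2 ^ q).natDegree) ((w.1 ^ q + Polynomial.X * w.2 ^ q).natDegree)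
    rw [h2, Polynomial.natDegree_zero, zero_pow (by omega : q ≠ 0), mul_zero, add_zero,
      Polynomial.natDegree_zero, Polynomial.natDegree_pow]
    have h1' : w.1.natDegree ≤ q * w.1.natDegree := Nat.le_mul_of_pos_left _ (by omega)
    simp only [max_le_iff, le_max_iff]
    omega
  · exact le_of_lt (Hgt_lt hq h2)

lemma Hgt_iter_le {q : ℕ} (hq : 2 ≤ q) (j : ℕ) {w : Polynomial F × Polynomial F}
    (hw : w ≠ 0) : Hgt w ≤ Hgt ((Gm q Polynomial.X)^[j] w) := by
  induction j generalizing w with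
  | zero => simp
  | succ j ih =>
      rw [Function.iterate_succ_apply]
      exact le_trans (Hgt_le hq hw) (ih (Gm_poly_ne hq hw))

lemma Gm_iter_poly_ne {q : ℕ} (hq : 2 ≤ q) (j : ℕ) {w : Polynomial F × Polynomial F}
    (hw : w ≠ 0) : (Gm q Polynomial.X)^[j] w ≠ 0 := by
  induction j generalizing w with
  | zero => simpa
  | succ j ih =>
      rw [Function.iterate_succ_apply]
      exact ih (Gm_poly_ne hq hw)

lemma Gm_coprime {A : Type*} [CommRing A] (q : ℕ) (c : A) {w : A × A}
    (hc : IsCoprime w.1 w.2) : IsCoprime (Gm q c w).1 (Gm q c w).2 := by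
  have h1 : IsCoprime (w.2 ^ q) (w.1 ^ q) := hc.symm.pow
  have h2 := h1.add_mul_left_right c
  show IsCoprime (w.2 ^ q) (w.1 ^ q + c * w.2 ^ q)
  rwa [mul_comm (w.2 ^ q) c] at h2

lemma Gm_iter_coprime {A : Type*} [CommRing A] (q : ℕ) (c : A) (j : ℕ) {w : A × A}
    (hc : IsCoprime w.1 w.2) :
    IsCoprime (((Gm q c)^[j] w).1) (((Gm q c)^[j] w).2) := by
  induction j generalizing w with
  | zero => simpa
  | succ j ih =>
      rw [Function.iterate_succ_apply]
      exact ih (Gm_coprime q c hc)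

end Poly

end SUAux

namespace SUAux

section Base

variable (p : ℕ) [Fact p.Prime]

lemma no_eigen_base (e r : ℕ) (he : 1 ≤ e) (hr : 1 ≤ r)
    (w : FractionRing (Polynomial (ZMod p)) × FractionRing (Polynomial (ZMod p)))
    (ℓ : FractionRing (Polynomial (ZMod p))) (hw : w ≠ 0) (hl : ℓ ≠ 0)
    (heq : (Gm (p ^ e)
        (algebraMap (Polynomial (ZMod p)) (FractionRing (Polynomial (ZMod p)))
          Polynomial.X))^[r] w = ℓ • w) :
    False := by
  classical
  have hp2 : 2 ≤ p := Nat.Prime.two_le Fact.out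
  have hq2 : 2 ≤ p ^ e := le_trans hp2 (Nat.le_self_pow (by omega) p)
  have hι : Function.Injective
      (algebraMap (Polynomial (ZMod p)) (FractionRing (Polynomial (ZMod p)))) :=
    IsFractionRing.injective _ _
  obtain ⟨x₁, y₁, hy₁, ha⟩ := IsFractionRing.div_surjective (A := Polynomial (ZMod p)) w.1
  obtain ⟨x₂, y₂, hy₂, hb⟩ := IsFractionRing.div_surjective (A := Polynomial (ZMod p)) w.2
  set ι := algebraMap (Polynomial (ZMod p)) (FractionRing (Polynomial (ZMod p))) with hιdef
  have hy₁' : y₁ ≠ 0 := nonZeroDivisors.ne_zero hy₁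
  have hy₂' : y₂ ≠ 0 := nonZeroDivisors.ne_zero hy₂
  have hy₁k : ι y₁ ≠ 0 := fun h => hy₁' (hι (by rw [h, map_zero]))
  have hy₂k : ι y₂ ≠ 0 := fun h => hy₂' (hι (by rw [h, map_zero]))
  have hDne : ι (y₁ * y₂) ≠ 0 := by rw [map_mul]; exact mul_ne_zero hy₁k hy₂k
  have haN : w.1 = ι (x₁ * y₂) / ι (y₁ * y₂) := by
    rw [← ha, map_mul, map_mul, mul_div_mul_right _ _ hy₂k]
  have hbN : w.2 = ι (x₂ * y₁) / ι (y₁ * y₂) := by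
    rw [← hb, map_mul, map_mul, mul_comm (ι x₂) (ι y₁), mul_div_mul_left _ _ hy₁k]
  have hN : ¬(x₁ * y₂ = 0 ∧ x₂ * y₁ = 0) := by
    rintro ⟨e1, e2⟩
    apply hw
    rw [pair_eq_zero_iff, haN, hbN, e1, e2, map_zero, zero_div]
    exact ⟨rfl, rfl⟩
  have hg : gcd (x₁ * y₂) (x₂ * y₁) ≠ 0 := by
    intro h0
    exact hN ((gcd_eq_zero_iff _ _).mp h0)
  set α := (x₁ * y₂) / gcd (x₁ * y₂) (x₂ * y₁) with hαdef
  set β := (x₂ * y₁) / gcd (x₁ * y₂) (x₂ * y₁) with hβdef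
  have hgα : gcd (x₁ * y₂) (x₂ * y₁) * α = x₁ * y₂ :=
    EuclideanDomain.mul_div_cancel' hg (gcd_dvd_left _ _)
  have hgβ : gcd (x₁ * y₂) (x₂ * y₁) * β = x₂ * y₁ :=
    EuclideanDomain.mul_div_cancel' hg (gcd_dvd_right _ _)
  have hcop : IsCoprime α β := by
    rcases eq_or_ne (x₂ * y₁) 0 with h2 | h2
    · have h1 : x₁ * y₂ ≠ 0 := fun h0 => hN ⟨h0, h2⟩
      have h3 := isCoprime_div_gcd_div_gcd (p := x₂ * y₁) (q := x₁ * y₂) h1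
      rw [gcd_comm (x₂ * y₁) (x₁ * y₂)] at h3
      exact h3.symm
    · exact isCoprime_div_gcd_div_gcd h2
  have hpairne' : ((α, β) : Polynomial (ZMod p) × Polynomial (ZMod p)) ≠ 0 := by
    intro h0
    obtain ⟨z1, z2⟩ := (pair_eq_zero_iff' _).mp h0
    exact hN ⟨by rw [← hgα, show α = 0 from z1, mul_zero],
      by rw [← hgβ, show β = 0 from z2, mul_zero]⟩
  have hpairne : ((ι α, ι β) : FractionRing (Polynomial (ZMod p)) ×
      FractionRing (Polynomial (ZMod p))) ≠ 0 := by
    intro h0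
    obtain ⟨z1, z2⟩ := (pair_eq_zero_iff' _).mp h0
    refine hpairne' (by
      rw [pair_eq_zero_iff']
      exact ⟨hι (by rw [map_zero]; exact (show ι α = 0 from z1)),
        hι (by rw [map_zero]; exact (show ι β = 0 from z2))⟩)
  have hgk : ι (gcd (x₁ * y₂) (x₂ * y₁)) ≠ 0 := fun h => hg (hι (by rw [h, map_zero]))
  set μ := ι (gcd (x₁ * y₂) (x₂ * y₁)) / ι (y₁ * y₂) with hμdef
  have hμ : μ ≠ 0 := div_ne_zero hgk hDne
  have hwu : w = μ • ((ι α, ι β) : FractionRing (Polynomial (ZMod p)) ×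
      FractionRing (Polynomial (ZMod p))) := by
    rw [smul_pair, Prod.ext_iff]
    refine ⟨?_, ?_⟩
    · show w.1 = μ * ι α
      rw [haN, ← hgα, map_mul, hμdef]
      rw [div_mul_eq_mul_div]
    · show w.2 = μ * ι β
      rw [hbN, ← hgβ, map_mul, hμdef]
      rw [div_mul_eq_mul_div]
  rw [hwu, Gm_iter_smul] at heq
  have hμQ : μ ^ (p ^ e) ^ r ≠ 0 := pow_ne_zero _ hμ
  set ℓ' := (μ ^ (p ^ e) ^ r)⁻¹ * (ℓ * μ) with hℓ'def
  have heq2 : (Gm (p ^ e) (ι Polynomial.X))^[r] (ι α, ι β) = ℓ' • (ι α, ι β) := by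
    have h4 := congrArg (fun z => (μ ^ (p ^ e) ^ r)⁻¹ • z) heq
    simp only [smul_smul] at h4
    rw [inv_mul_cancel₀ hμQ, one_smul] at h4
    exact h4
  have hℓ' : ℓ' ≠ 0 := by
    rw [hℓ'def]
    exact mul_ne_zero (inv_ne_zero hμQ) (mul_ne_zero hl hμ)
  set P := (Gm (p ^ e) (Polynomial.X : Polynomial (ZMod p)))^[r] (α, β) with hPdef
  have hmap := Gm_iter_map ι (p ^ e) Polynomial.X r (α, β)
  have hP : ((ι P.1, ι P.2) : FractionRing (Polynomial (ZMod p)) ×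
      FractionRing (Polynomial (ZMod p))) = ℓ' • (ι α, ι β) := hmap.trans heq2
  have hP1 : ι P.1 = ℓ' * ι α := congrArg Prod.fst hP
  have hP2 : ι P.2 = ℓ' * ι β := congrArg Prod.snd hP
  have hcopP : IsCoprime P.1 P.2 := Gm_iter_coprime _ _ r hcop
  obtain ⟨u', v', huv⟩ := hcopP
  have hd : ℓ' * ι (u' * α + v' * β) = 1 := by
    have h3 := congrArg ι huv
    simp only [map_add, map_mul, map_one] at h3
    rw [hP1, hP2] at h3
    rw [map_add, map_mul, map_mul]
    linear_combination h3
  have hdne : ι (u' * α + v' * β) ≠ 0 := by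
    intro h0
    rw [h0, mul_zero] at hd
    exact zero_ne_one hd
  have hdne0 : (u' * α + v' * β) ≠ 0 := fun h0 => hdne (by rw [h0, map_zero])
  have hQ1 : P.1 * (u' * α + v' * β) = α := by
    apply hι
    rw [map_mul, hP1]
    linear_combination ι α * hd
  have hQ2 : P.2 * (u' * α + v' * β) = β := by
    apply hι
    rw [map_mul, hP2]
    linear_combination ι β * hd
  obtain ⟨s', t', hst⟩ := hcop
  have hdunit : IsUnit (u' * α + v' * β) :=
    IsUnit.of_mul_eq_one (s' * P.1 + t' * P.2)
      (by linear_combination s' * hQ1 + t' * hQ2 + hst)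
  have hddeg : (u' * α + v' * β).natDegree = 0 :=
    Polynomial.natDegree_eq_zero_of_isUnit hdunit
  have e1 : α.natDegree = P.1.natDegree := by
    rcases eq_or_ne P.1 0 with h0 | h0
    · rw [← hQ1, h0, zero_mul]
    · rw [← hQ1, Polynomial.natDegree_mul h0 hdne0, hddeg, add_zero]
  have e2 : β.natDegree = P.2.natDegree := by
    rcases eq_or_ne P.2 0 with h0 | h0
    · rw [← hQ2, h0, zero_mul]
    · rw [← hQ2, Polynomial.natDegree_mul h0 hdne0, hddeg, add_zero]
  obtain ⟨r', rfl⟩ : ∃ r', r = r' + 1 := ⟨r - 1, by omega⟩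
  have hPsucc : P = Gm (p ^ e) Polynomial.X
      ((Gm (p ^ e) Polynomial.X)^[r'] (α, β)) := by
    rw [hPdef, Function.iterate_succ_apply']
  have hprev : (Gm (p ^ e) (Polynomial.X : Polynomial (ZMod p)))^[r'] (α, β) ≠ 0 :=
    Gm_iter_poly_ne hq2 r' hpairne'
  rcases eq_or_ne β 0 with hβ0 | hβ0
  · have hPz : P.2 = 0 := by
      have h5 : P.2 * (u' * α + v' * β) = 0 := hQ2.trans hβ0
      rcases mul_eq_zero.mp h5 with h | h
      · exact h
      · exact absurd h hdne0
    exact Gm_snd_ne hq2 hprev (by rw [← hPsucc]; exact hPz)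
  · have s1 : Hgt ((α, β) : Polynomial (ZMod p) × Polynomial (ZMod p)) <
        Hgt (Gm (p ^ e) Polynomial.X (α, β)) := Hgt_lt hq2 hβ0
    have s2 : Hgt (Gm (p ^ e) Polynomial.X
        ((α, β) : Polynomial (ZMod p) × Polynomial (ZMod p))) ≤ Hgt P := by
      rw [hPdef, Function.iterate_succ_apply]
      exact Hgt_iter_le hq2 r' (Gm_poly_ne hq2 hpairne')
    have s3 : Hgt P = Hgt ((α, β) : Polynomial (ZMod p) × Polynomial (ZMod p)) := by
      show max P.1.natDegree P.2.natDegree = max α.natDegree β.natDegree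
      rw [e1, e2]
    omega

end Base

end SUAux

namespace SUAux

section Main

variable (p : ℕ) [Fact p.Prime]

lemma no_eigen (e : ℕ) (he : 1 ≤ e) (n : ℕ) :
    ∀ (r : ℕ), 1 ≤ r →
      ∀ (w : FractionRing (Polynomial (ZMod p)) × FractionRing (Polynomial (ZMod p)))
        (ℓ : FractionRing (Polynomial (ZMod p))), w ≠ 0 → ℓ ≠ 0 →
      (Gm (p ^ e) ((algebraMap (Polynomial (ZMod p)) (FractionRing (Polynomial (ZMod p)))
          Polynomial.X) ^ p ^ n))^[r] w = ℓ • w → False := by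
  haveI : CharP (FractionRing (Polynomial (ZMod p))) p :=
    charP_of_injective_algebraMap
      (IsFractionRing.injective (Polynomial (ZMod p)) (FractionRing (Polynomial (ZMod p)))) p
  induction n with
  | zero =>
      intro r hr w ℓ hw hl heq
      rw [pow_zero, pow_one] at heq
      exact no_eigen_base p e r he hr w ℓ hw hl heq
  | succ n ih =>
      intro r hr w ℓ hw hl heq
      set x := algebraMap (Polynomial (ZMod p)) (FractionRing (Polynomial (ZMod p)))
        Polynomial.X with hx
      obtain ⟨r', rfl⟩ : ∃ r', r = r' + 1 := ⟨r - 1, by omega⟩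
      set uv := (Gm (p ^ e) (x ^ p ^ (n + 1)))^[r'] w with huv
      have hw' : Gm (p ^ e) (x ^ p ^ (n + 1)) uv = ℓ • w := by
        have heqc := heq
        rw [Function.iterate_succ_apply'] at heqc
        exact heqc
      set s : FractionRing (Polynomial (ZMod p)) × FractionRing (Polynomial (ZMod p)) :=
        (uv.2 ^ p ^ (e - 1), uv.1 ^ p ^ (e - 1) + x ^ p ^ n * uv.2 ^ p ^ (e - 1)) with hs
      have hpe : p ^ (e - 1) * p = p ^ e := by
        conv_rhs => rw [show e = (e - 1) + 1 by omega]
        rw [pow_succ]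
      have hpn : p ^ n * p = p ^ (n + 1) := by rw [← pow_succ]
      have hsp : (s.1 ^ p, s.2 ^ p) = ℓ • w := by
        rw [← hw']
        rw [Prod.ext_iff]
        constructor
        · show (uv.2 ^ p ^ (e - 1)) ^ p = uv.2 ^ p ^ e
          rw [← pow_mul, hpe]
        · show (uv.1 ^ p ^ (e - 1) + x ^ p ^ n * uv.2 ^ p ^ (e - 1)) ^ p
            = uv.1 ^ p ^ e + x ^ p ^ (n + 1) * uv.2 ^ p ^ e
          rw [add_pow_char, mul_pow, ← pow_mul, ← pow_mul, ← pow_mul, hpe, hpn]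
      have heq' : (Gm (p ^ e) (x ^ p ^ (n + 1)))^[r' + 1] (s.1 ^ p, s.2 ^ p)
          = ℓ ^ (p ^ e) ^ (r' + 1) • (s.1 ^ p, s.2 ^ p) := by
        rw [hsp, Gm_iter_smul, heq, ← hsp]
      have hxp : x ^ p ^ (n + 1) = (x ^ p ^ n) ^ p := by rw [← pow_mul, hpn]
      rw [hxp, Gm_iter_frob] at heq'
      rw [smul_pair] at heq'
      have hexp : p ^ (e * (r' + 1) - 1) * p = p ^ (e * (r' + 1)) := by
        have h1 : 1 ≤ e * (r' + 1) := Nat.one_le_iff_ne_zero.mpr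
          (Nat.mul_ne_zero (by omega) (by omega))
        conv_rhs => rw [show e * (r' + 1) = (e * (r' + 1) - 1) + 1 by omega]
        rw [pow_succ]
      have hm : (ℓ ^ p ^ (e * (r' + 1) - 1)) ^ p = ℓ ^ (p ^ e) ^ (r' + 1) := by
        rw [← pow_mul, hexp, ← pow_mul p e (r' + 1)]
      have c1 : ((Gm (p ^ e) (x ^ p ^ n))^[r' + 1] s).1 ^ p
          = ℓ ^ (p ^ e) ^ (r' + 1) * s.1 ^ p := congrArg Prod.fst heq'
      have c2 : ((Gm (p ^ e) (x ^ p ^ n))^[r' + 1] s).2 ^ p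
          = ℓ ^ (p ^ e) ^ (r' + 1) * s.2 ^ p := congrArg Prod.snd heq'
      have hTs : (Gm (p ^ e) (x ^ p ^ n))^[r' + 1] s
          = (ℓ ^ p ^ (e * (r' + 1) - 1)) • s := by
        rw [smul_pair, Prod.ext_iff]
        constructor
        · apply ppow_inj' (p := p)
          rw [c1, mul_pow, hm]
        · apply ppow_inj' (p := p)
          rw [c2, mul_pow, hm]
      have hp0 : p ≠ 0 := Nat.Prime.ne_zero Fact.out
      have hs0 : s ≠ 0 := by
        intro h0
        have hz : ((s.1 ^ p, s.2 ^ p) : FractionRing (Polynomial (ZMod p)) ×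
            FractionRing (Polynomial (ZMod p))) = 0 := by
          rw [h0]
          show (((0 : FractionRing (Polynomial (ZMod p))) ^ p,
            (0 : FractionRing (Polynomial (ZMod p))) ^ p) : _ × _) = 0
          rw [zero_pow hp0]
          rfl
        rw [hz] at hsp
        rcases smul_eq_zero.mp hsp.symm with h | h
        · exact hl h
        · exact hw h
      exact ih (r' + 1) hr s _ hs0 (pow_ne_zero _ hl) hTs

lemma exists_pow_of {K' : Type*} [CommRing K'] [CharP K' p]
    (x : PerfectClosure K' p) :
    ∃ N a, x ^ p ^ N = PerfectClosure.of K' p a := by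
  induction x using PerfectClosure.induction_on with
  | h y =>
      refine ⟨y.1, y.2, ?_⟩
      rw [← iterate_frobenius]
      exact PerfectClosure.iterate_frobenius_mk K' p y.1 y.2

lemma exists_pow_of_add {K' : Type*} [CommRing K'] [CharP K' p]
    (x : PerfectClosure K' p) (N : ℕ) (a : K')
    (h : x ^ p ^ N = PerfectClosure.of K' p a) (j : ℕ) :
    ∃ b, x ^ p ^ (N + j) = PerfectClosure.of K' p b := by
  induction j with
  | zero => exact ⟨a, h⟩
  | succ j ih =>
      obtain ⟨b, hb⟩ := ih
      refine ⟨b ^ p, ?_⟩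
      rw [show p ^ (N + (j + 1)) = p ^ (N + j) * p from pow_succ p (N + j),
        pow_mul, hb, map_pow]

lemma K_no_eigen (e : ℕ) (he : 1 ≤ e) (r : ℕ) (hr : 1 ≤ r)
    (v : PerfectClosure (FractionRing (Polynomial (ZMod p))) p ×
      PerfectClosure (FractionRing (Polynomial (ZMod p))) p)
    (hv : v ≠ 0)
    (lam : PerfectClosure (FractionRing (Polynomial (ZMod p))) p)
    (heq : (Gm (p ^ e) (PerfectClosure.of (FractionRing (Polynomial (ZMod p))) p
        (algebraMap (Polynomial (ZMod p)) (FractionRing (Polynomial (ZMod p)))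
          Polynomial.X)))^[r] v = lam • v) :
    False := by
  haveI : CharP (FractionRing (Polynomial (ZMod p))) p :=
    charP_of_injective_algebraMap
      (IsFractionRing.injective (Polynomial (ZMod p)) (FractionRing (Polynomial (ZMod p)))) p
  have hp2 : 2 ≤ p := Nat.Prime.two_le Fact.out
  have hp0 : p ≠ 0 := by omega
  have hq0 : (p : ℕ) ^ e ≠ 0 := pow_ne_zero _ hp0
  have hlam : lam ≠ 0 := by
    intro h0
    rw [h0, zero_smul] at heq
    exact Gm_iter_ne_zero hq0 _ r hv heq
  obtain ⟨N₁, a₁', h₁⟩ := exists_pow_of p v.1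
  obtain ⟨N₂, a₂', h₂⟩ := exists_pow_of p v.2
  obtain ⟨N₃, l', h₃⟩ := exists_pow_of p lam
  obtain ⟨a₁, ha₁⟩ := exists_pow_of_add p v.1 N₁ a₁' h₁ (N₂ + N₃)
  obtain ⟨a₂, ha₂⟩ := exists_pow_of_add p v.2 N₂ a₂' h₂ (N₁ + N₃)
  obtain ⟨l, hl⟩ := exists_pow_of_add p lam N₃ l' h₃ (N₁ + N₂)
  set N := N₁ + (N₂ + N₃) with hN
  rw [show N₂ + (N₁ + N₃) = N by omega] at ha₂
  rw [show N₃ + (N₁ + N₂) = N by omega] at hl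
  have hmap := Gm_iter_map
    (iterateFrobenius (PerfectClosure (FractionRing (Polynomial (ZMod p))) p) p N)
    (p ^ e) (PerfectClosure.of (FractionRing (Polynomial (ZMod p))) p
      (algebraMap (Polynomial (ZMod p)) (FractionRing (Polynomial (ZMod p))) Polynomial.X))
    r v
  rw [heq] at hmap
  simp only [smul_pair, map_mul, iterateFrobenius_def] at hmap
  rw [ha₁, ha₂, hl] at hmap
  rw [show (PerfectClosure.of (FractionRing (Polynomial (ZMod p))) p
      (algebraMap (Polynomial (ZMod p)) (FractionRing (Polynomial (ZMod p)))
        Polynomial.X)) ^ p ^ N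
      = PerfectClosure.of (FractionRing (Polynomial (ZMod p))) p
        ((algebraMap (Polynomial (ZMod p)) (FractionRing (Polynomial (ZMod p)))
          Polynomial.X) ^ p ^ N) from (map_pow _ _ _).symm] at hmap
  have hof := Gm_iter_map (PerfectClosure.of (FractionRing (Polynomial (ZMod p))) p)
    (p ^ e) ((algebraMap (Polynomial (ZMod p)) (FractionRing (Polynomial (ZMod p)))
      Polynomial.X) ^ p ^ N) r (a₁, a₂)
  have hinj : Function.Injective
      (PerfectClosure.of (FractionRing (Polynomial (ZMod p))) p) :=
    (PerfectClosure.of (FractionRing (Polynomial (ZMod p))) p).injective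
  have hT := hof.trans hmap.symm
  have c1 : ((Gm (p ^ e) ((algebraMap (Polynomial (ZMod p))
      (FractionRing (Polynomial (ZMod p))) Polynomial.X) ^ p ^ N))^[r] (a₁, a₂)).1
      = l * a₁ := hinj (by rw [map_mul]; exact congrArg Prod.fst hT)
  have c2 : ((Gm (p ^ e) ((algebraMap (Polynomial (ZMod p))
      (FractionRing (Polynomial (ZMod p))) Polynomial.X) ^ p ^ N))^[r] (a₁, a₂)).2
      = l * a₂ := hinj (by rw [map_mul]; exact congrArg Prod.snd hT)
  have hane : ((a₁, a₂) : FractionRing (Polynomial (ZMod p)) ×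
      FractionRing (Polynomial (ZMod p))) ≠ 0 := by
    intro h0
    obtain ⟨z1, z2⟩ := (pair_eq_zero_iff' _).mp h0
    apply hv
    rw [pair_eq_zero_iff']
    constructor
    · have hz : v.1 ^ p ^ N = 0 := by
        rw [ha₁, show a₁ = 0 from z1, map_zero]
      exact pow_eq_zero_iff (pow_ne_zero _ hp0) |>.mp hz
    · have hz : v.2 ^ p ^ N = 0 := by
        rw [ha₂, show a₂ = 0 from z2, map_zero]
      exact pow_eq_zero_iff (pow_ne_zero _ hp0) |>.mp hz
  have hlne : l ≠ 0 := by
    intro h0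
    rw [h0, map_zero] at hl
    exact hlam (pow_eq_zero_iff (pow_ne_zero _ hp0) |>.mp hl)
  exact no_eigen p e he N r hr (a₁, a₂) l hane hlne
    (by rw [smul_pair]; exact Prod.ext_iff.mpr ⟨c1, c2⟩)

end Main

end SUAux


/-- Let `K = F_p(X)^{1/p^∞}` be the perfect closure of the
rational function field and `q = pᵉ`.  The map
`F(v₁, v₂) = (v₂^q, v₁^q + X·v₂^q)` on `K × K` is an injective, additive,
`q`-semilinear map, and for every `r ≥ 1` the only `F^r`-stable `K`-subspaces of
`K × K` are `0` and `K × K`; so `(K², F)` is a simple unit `K[F]`-module, while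
(as `K` is perfect, `D_K = K`, so `K`-subspaces are exactly `D_K`-submodules) it
is not `D_K`-simple. -/
theorem simple_unit_not_D_simple_example
    (p : ℕ) [Fact p.Prime]
    (e : ℕ) (he : 1 ≤ e)
    (X : PerfClos p)
    (hX : X = PerfectClosure.of (FpRatFunc p) p
      (algebraMap (Polynomial (ZMod p)) (FpRatFunc p) Polynomial.X))
    (F : PerfClos p × PerfClos p → PerfClos p × PerfClos p)
    (hF : ∀ v : PerfClos p × PerfClos p,
      F v = (v.2 ^ p ^ e, v.1 ^ p ^ e + X * v.2 ^ p ^ e)) :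
    Function.Injective F ∧
    (∀ v w : PerfClos p × PerfClos p, F (v + w) = F v + F w) ∧
    (∀ (c : PerfClos p) (v : PerfClos p × PerfClos p), F (c • v) = c ^ p ^ e • F v) ∧
    (∀ r : ℕ, 1 ≤ r →
      ∀ W : Submodule (PerfClos p) (PerfClos p × PerfClos p),
        (∀ w ∈ W, F^[r] w ∈ W) → W = ⊥ ∨ W = ⊤) ∧
    (∃ W : Submodule (PerfClos p) (PerfClos p × PerfClos p), W ≠ ⊥ ∧ W ≠ ⊤) := by
  have hFG : F = SUAux.Gm (p ^ e) X := by
    funext v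
    rw [hF v]
    rfl
  have hinjF : Function.Injective F := by
    intro v w h
    rw [hF v, hF w] at h
    have h1 : v.2 ^ p ^ e = w.2 ^ p ^ e := congrArg Prod.fst h
    have h2 : v.1 ^ p ^ e + X * v.2 ^ p ^ e = w.1 ^ p ^ e + X * w.2 ^ p ^ e :=
      congrArg Prod.snd h
    have hv2 : v.2 = w.2 := SUAux.ppow_inj (p := p) h1
    have hv1 : v.1 = w.1 := by
      apply SUAux.ppow_inj (p := p)
      rw [hv2] at h2
      exact add_right_cancel h2
    exact Prod.ext_iff.mpr ⟨hv1, hv2⟩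
  refine ⟨hinjF, ?_, ?_, ?_, ?_⟩
  · intro v w
    rw [hF, hF, hF]
    rw [Prod.ext_iff]
    constructor
    · show ((v + w).2) ^ p ^ e = v.2 ^ p ^ e + w.2 ^ p ^ e
      rw [Prod.snd_add, add_pow_char_pow]
    · show ((v + w).1) ^ p ^ e + X * ((v + w).2) ^ p ^ e
        = (v.1 ^ p ^ e + X * v.2 ^ p ^ e) + (w.1 ^ p ^ e + X * w.2 ^ p ^ e)
      rw [Prod.fst_add, Prod.snd_add, add_pow_char_pow, add_pow_char_pow]
      ring
  · intro c v
    rw [hF, hF]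
    rw [SUAux.smul_pair, SUAux.smul_pair, Prod.ext_iff]
    constructor
    · show (c * v.2) ^ p ^ e = c ^ p ^ e * v.2 ^ p ^ e
      rw [mul_pow]
    · show (c * v.1) ^ p ^ e + X * (c * v.2) ^ p ^ e
        = c ^ p ^ e * (v.1 ^ p ^ e + X * v.2 ^ p ^ e)
      rw [mul_pow, mul_pow]
      ring
  · intro r hr W hWstab
    rcases eq_or_ne W ⊥ with hbot | hbot
    · exact Or.inl hbot
    right
    obtain ⟨v, hvW, hv0⟩ := Submodule.exists_mem_ne_zero_of_ne_bot hbot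
    have hwW : F^[r] v ∈ W := hWstab v hvW
    set w := F^[r] v with hwdef
    rcases eq_or_ne (v.1 * w.2 - v.2 * w.1) 0 with hd | hd
    · -- eigenvector case: contradiction
      exfalso
      rcases eq_or_ne v.1 0 with hv1 | hv1
      · have hv2 : v.2 ≠ 0 := by
          intro h0
          exact hv0 ((SUAux.pair_eq_zero_iff' v).mpr ⟨hv1, h0⟩)
        have hw1 : w.1 = 0 := by
          rw [hv1, zero_mul] at hd
          have := sub_eq_zero.mp hd
          rcases mul_eq_zero.mp this.symm with h | h
          · exact absurd h hv2
          · exact h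
        have hweq : w = (w.2 / v.2) • v := by
          rw [SUAux.smul_pair, Prod.ext_iff]
          refine ⟨?_, ?_⟩
          · rw [hw1, hv1, mul_zero]
          · rw [div_mul_cancel₀ _ hv2]
        refine SUAux.K_no_eigen p e he r hr v hv0 (w.2 / v.2) ?_
        rw [← hX, ← hFG, ← hwdef]
        exact hweq
      · have hweq : w = (w.1 / v.1) • v := by
          rw [SUAux.smul_pair, Prod.ext_iff]
          refine ⟨?_, ?_⟩
          · rw [div_mul_cancel₀ _ hv1]
          · field_simp
            linear_combination hd
        refine SUAux.K_no_eigen p e he r hr v hv0 (w.1 / v.1) ?_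
        rw [← hX, ← hFG, ← hwdef]
        exact hweq
    · -- v, w span everything
      rw [Submodule.eq_top_iff']
      intro z
      have hz : z = ((z.1 * w.2 - z.2 * w.1) / (v.1 * w.2 - v.2 * w.1)) • v
          + ((v.1 * z.2 - v.2 * z.1) / (v.1 * w.2 - v.2 * w.1)) • w := by
        rw [SUAux.smul_pair, SUAux.smul_pair, Prod.ext_iff]
        constructor
        · show z.1 = (z.1 * w.2 - z.2 * w.1) / (v.1 * w.2 - v.2 * w.1) * v.1
            + (v.1 * z.2 - v.2 * z.1) / (v.1 * w.2 - v.2 * w.1) * w.1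
          rw [div_mul_eq_mul_div, div_mul_eq_mul_div, ← add_div, eq_div_iff hd]
          ring
        · show z.2 = (z.1 * w.2 - z.2 * w.1) / (v.1 * w.2 - v.2 * w.1) * v.2
            + (v.1 * z.2 - v.2 * z.1) / (v.1 * w.2 - v.2 * w.1) * w.2
          rw [div_mul_eq_mul_div, div_mul_eq_mul_div, ← add_div, eq_div_iff hd]
          ring
      rw [hz]
      exact W.add_mem (W.smul_mem _ hvW) (W.smul_mem _ hwW)
  · refine ⟨Submodule.span (PerfClos p) {((1 : PerfClos p), (0 : PerfClos p))}, ?_, ?_⟩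
    · intro h0
      rw [Submodule.span_singleton_eq_bot] at h0
      exact one_ne_zero (congrArg Prod.fst h0)
    · intro h0
      have hmem : ((0 : PerfClos p), (1 : PerfClos p)) ∈
          Submodule.span (PerfClos p) {((1 : PerfClos p), (0 : PerfClos p))} := by
        rw [h0]
        trivial
      obtain ⟨c, hc⟩ := Submodule.mem_span_singleton.mp hmem
      rw [SUAux.smul_pair] at hc
      have h2 : c * 0 = 1 := congrArg Prod.snd hc
      rw [mul_zero] at h2
      exact zero_ne_one h2
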